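/- For a Boolean function f: {0,1}^n → {-1,1} and J ⊆ [n], the symmetric influence satisfies SymInf_f(J) = (1/2) Σ_{S ⊆ [n]} Var_{π ∈ S_J}[f̂(πS)], where f̂(S) are the Fourier coefficients of f and πS = {π(i) : i ∈ S}. -/

import Mathlib

open Finset

variable {n : ℕ}

/-- `override J x y` is the vector equal to `y` on `J` and `x` elsewhere. -/
def override (J : Finset (Fin n)) (x y : Fin n → Bool) : Fin n → Bool :=
  fun i => if i ∈ J then y i else x i

/-- Influence of the set `J` in `f`. -/
noncomputable def Infl (f : (Fin n → Bool) → Bool) (J : Finset (Fin n)) : ℝ :=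
  ((Finset.univ.filter (fun p : (Fin n → Bool) × (Fin n → Bool) =>
      f p.1 ≠ f (override J p.1 p.2))).card : ℝ) / ((2 ^ n : ℝ) * (2 ^ n : ℝ))

/-- Normalized Hamming distance between Boolean functions. -/
noncomputable def hdist (f g : (Fin n → Bool) → Bool) : ℝ :=
  ((Finset.univ.filter (fun x => f x ≠ g x)).card : ℝ) / (2 ^ n : ℝ)

/-- `g` is a `k`-junta: it depends on at most `k` variables. -/
def IsJunta (k : ℕ) (g : (Fin n → Bool) → Bool) : Prop :=
  ∃ S : Finset (Fin n), S.card ≤ k ∧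
    ∀ x y : Fin n → Bool, (∀ i ∈ S, x i = y i) → g x = g y

/-- The permutations of `[n]` fixing every element outside `J`. -/
def permsOn (J : Finset (Fin n)) : Finset (Equiv.Perm (Fin n)) :=
  Finset.univ.filter (fun π => ∀ i ∉ J, π i = i)

/-- The action of a permutation on a vector: `(π • x)_{π(i)} = x_i`. -/
def permApply (π : Equiv.Perm (Fin n)) (x : Fin n → Bool) : Fin n → Bool :=
  fun j => x (π.symm j)

/-- Symmetric influence of the set `J` in `f`. -/
noncomputable def SymInf (f : (Fin n → Bool) → Bool) (J : Finset (Fin n)) : ℝ :=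
  (((Finset.univ ×ˢ permsOn J).filter (fun p : (Fin n → Bool) × Equiv.Perm (Fin n) =>
      f p.1 ≠ f (permApply p.2 p.1))).card : ℝ) /
    ((2 ^ n : ℝ) * ((permsOn J).card : ℝ))

/-- `f` is `J`-symmetric: invariant under permuting the coordinates in `J`. -/
def JSymmetric (f : (Fin n → Bool) → Bool) (J : Finset (Fin n)) : Prop :=
  ∀ x : Fin n → Bool, ∀ π ∈ permsOn J, f (permApply π x) = f x

/-- `f` is `t`-symmetric: it is `J`-symmetric for some `J` of size at least `t`. -/
def TSymmetric (t : ℕ) (f : (Fin n → Bool) → Bool) : Prop :=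
  ∃ J : Finset (Fin n), t ≤ J.card ∧ JSymmetric f J

/-- The character `χ_S(x) = (-1)^{Σ_{i∈S} x_i}`. -/
def chi {n : ℕ} (S : Finset (Fin n)) (x : Fin n → Bool) : ℝ :=
  ∏ i ∈ S, (if x i then (-1 : ℝ) else 1)

/-- Fourier coefficient of `f` at `S`. -/
noncomputable def fhat {n : ℕ} (f : (Fin n → Bool) → ℝ) (S : Finset (Fin n)) : ℝ :=
  (∑ x : Fin n → Bool, f x * chi S x) / (2 ^ n : ℝ)

/-- Symmetric influence of a `±1`-valued function. -/
noncomputable def SymInfR {n : ℕ} (f : (Fin n → Bool) → ℝ) (J : Finset (Fin n)) : ℝ :=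
  (((Finset.univ ×ˢ permsOn J).filter (fun p : (Fin n → Bool) × Equiv.Perm (Fin n) =>
      f p.1 ≠ f (permApply p.2 p.1))).card : ℝ) /
    ((2 ^ n : ℝ) * ((permsOn J).card : ℝ))

/-- Expectation over a uniformly random permutation in `permsOn J`. -/
noncomputable def permExp {n : ℕ} (J : Finset (Fin n)) (g : Equiv.Perm (Fin n) → ℝ) : ℝ :=
  (∑ π ∈ permsOn J, g π) / ((permsOn J).card : ℝ)

lemma one_mem_permsOn (J : Finset (Fin n)) : 1 ∈ permsOn J := by
  simp [permsOn]

lemma permsOn_card_pos (J : Finset (Fin n)) : 0 < (permsOn J).card :=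
  Finset.card_pos.2 ⟨1, one_mem_permsOn J⟩

lemma mul_mem_permsOn {J : Finset (Fin n)} {σ π : Equiv.Perm (Fin n)}
    (hσ : σ ∈ permsOn J) (hπ : π ∈ permsOn J) : σ * π ∈ permsOn J := by
  simp only [permsOn, mem_filter, mem_univ, true_and] at *
  intro i hi
  simp [Equiv.Perm.mul_apply, hπ i hi, hσ i hi]

lemma inv_mem_permsOn {J : Finset (Fin n)} {π : Equiv.Perm (Fin n)}
    (hπ : π ∈ permsOn J) : π⁻¹ ∈ permsOn J := by
  simp only [permsOn, mem_filter, mem_univ, true_and] at *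
  intro i hi
  have h := hπ i hi
  calc π⁻¹ i = π⁻¹ (π i) := by rw [h]
    _ = i := π.symm_apply_apply i

lemma sum_chi_chi (x y : Fin n → Bool) :
    ∑ S : Finset (Fin n), chi S x * chi S y = if x = y then (2:ℝ)^n else 0 := by
  have h1 : ∀ S : Finset (Fin n), chi S x * chi S y
      = ∏ i ∈ S, ((if x i then (-1:ℝ) else 1) * (if y i then (-1:ℝ) else 1)) := by
    intro S; rw [Finset.prod_mul_distrib]; rfl
  set s : Fin n → ℝ := fun i => (if x i then (-1:ℝ) else 1) * (if y i then (-1:ℝ) else 1) with hs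
  have h2 : ∑ S : Finset (Fin n), chi S x * chi S y = ∏ i : Fin n, (s i + 1) := by
    rw [Finset.prod_add]
    rw [Finset.powerset_univ]
    rw [Finset.sum_congr rfl (fun S _ => h1 S)]
    simp
  rw [h2]
  by_cases hxy : x = y
  · subst hxy
    simp only [if_pos rfl]
    have : ∀ i : Fin n, s i + 1 = 2 := by
      intro i; simp only [hs]; cases x i <;> norm_num
    rw [Finset.prod_congr rfl (fun i _ => this i)]
    simp [Finset.card_univ]
  · rw [if_neg hxy]
    obtain ⟨i, hi⟩ : ∃ i, x i ≠ y i := by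
      by_contra h
      push_neg at h
      exact hxy (funext h)
    apply Finset.prod_eq_zero (Finset.mem_univ i)
    simp only [hs]
    cases hx : x i <;> cases hy : y i <;> simp_all

lemma plancherel (f g : (Fin n → Bool) → ℝ) :
    ∑ S : Finset (Fin n), fhat f S * fhat g S = (∑ x, f x * g x) / (2^n : ℝ) := by
  have key : ∑ S : Finset (Fin n), (∑ x, f x * chi S x) * (∑ y, g y * chi S y)
      = (2^n : ℝ) * ∑ x, f x * g x := by
    have h1 : ∀ S : Finset (Fin n), (∑ x, f x * chi S x) * (∑ y, g y * chi S y)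
        = ∑ x, ∑ y, (f x * g y) * (chi S x * chi S y) := by
      intro S
      rw [Finset.sum_mul_sum]
      exact Finset.sum_congr rfl (fun x _ => Finset.sum_congr rfl (fun y _ => by ring))
    rw [Finset.sum_congr rfl (fun S _ => h1 S), Finset.sum_comm]
    have h2 : ∀ x : Fin n → Bool, ∑ S : Finset (Fin n), ∑ y, (f x * g y) * (chi S x * chi S y)
        = (2^n : ℝ) * (f x * g x) := by
      intro x
      rw [Finset.sum_comm]
      have h3 : ∀ y, ∑ S : Finset (Fin n), (f x * g y) * (chi S x * chi S y)
          = (f x * g y) * (if x = y then (2:ℝ)^n else 0) := by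
        intro y
        rw [← Finset.mul_sum, sum_chi_chi]
      rw [Finset.sum_congr rfl (fun y _ => h3 y)]
      have h4 : ∀ y, f x * g y * (if x = y then (2:ℝ)^n else 0)
          = if x = y then f x * g y * (2:ℝ)^n else 0 := by
        intro y; split <;> simp
      rw [Finset.sum_congr rfl (fun y _ => h4 y)]
      simp only [Finset.sum_ite_eq, Finset.mem_univ, if_pos]
      ring
    rw [Finset.sum_congr rfl (fun x _ => h2 x), ← Finset.mul_sum]
  have hP : (2:ℝ)^n ≠ 0 := by positivity
  unfold fhat
  have hd : ∀ S : Finset (Fin n), (∑ x, f x * chi S x)/(2^n:ℝ) * ((∑ x, g x * chi S x)/(2^n:ℝ))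
      = ((∑ x, f x * chi S x) * (∑ x, g x * chi S x)) / ((2^n:ℝ)*(2^n:ℝ)) := by
    intro S; rw [div_mul_div_comm]
  rw [Finset.sum_congr rfl (fun S _ => hd S), ← Finset.sum_div, key]
  field_simp

def permEquiv (π : Equiv.Perm (Fin n)) : (Fin n → Bool) ≃ (Fin n → Bool) where
  toFun := permApply π
  invFun := permApply π.symm
  left_inv := by intro x; funext j; simp [permApply]
  right_inv := by intro x; funext j; simp [permApply]

lemma fhat_perm (f : (Fin n → Bool) → ℝ) (π : Equiv.Perm (Fin n)) (S : Finset (Fin n)) :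
    fhat (fun x => f (permApply π x)) S = fhat f (S.image π) := by
  unfold fhat
  congr 1
  have hchi : ∀ x, chi (S.image π) (permApply π x) = chi S x := by
    intro x
    unfold chi permApply
    rw [Finset.prod_image (fun a _ b _ h => π.injective h)]
    simp
  calc ∑ x, f (permApply π x) * chi S x
      = ∑ x, (fun y => f y * chi (S.image π) y) (permEquiv π x) := by
        refine Finset.sum_congr rfl (fun x _ => ?_)
        simp only [permEquiv, Equiv.coe_fn_mk, hchi x]
    _ = ∑ y, f y * chi (S.image π) y := Equiv.sum_comp (permEquiv π) (fun y => f y * chi (S.image π) y)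

lemma indic (a b : ℝ) (ha : a = 1 ∨ a = -1) (hb : b = 1 ∨ b = -1) [Decidable (a ≠ b)] :
    (if a ≠ b then (1:ℝ) else 0) = (1 - a*b)/2 := by
  rcases ha with h|h <;> rcases hb with h'|h' <;> subst h <;> subst h' <;> norm_num

lemma sum_permsOn_mul (J : Finset (Fin n)) {π : Equiv.Perm (Fin n)} (hπ : π ∈ permsOn J)
    (F : Equiv.Perm (Fin n) → ℝ) :
    ∑ σ ∈ permsOn J, F (σ * π) = ∑ σ ∈ permsOn J, F σ := by
  refine Finset.sum_nbij' (fun σ => σ * π) (fun τ => τ * π⁻¹) ?_ ?_ ?_ ?_ ?_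
  · intro a ha; exact mul_mem_permsOn ha hπ
  · intro a ha; exact mul_mem_permsOn ha (inv_mem_permsOn hπ)
  · intro a _; group
  · intro a _; group
  · intro a _; rfl

lemma sum_image_univ (G : Finset (Fin n) → ℝ) (π : Equiv.Perm (Fin n)) :
    ∑ S : Finset (Fin n), G (S.image π) = ∑ S : Finset (Fin n), G S := by
  rw [← Equiv.sum_comp π.finsetCongr G]
  refine Finset.sum_congr rfl (fun S _ => ?_)
  congr 1
  rw [Equiv.finsetCongr_apply, Finset.map_eq_image]
  rfl

lemma aInv (f : (Fin n → Bool) → ℝ) (J : Finset (Fin n))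
    {π : Equiv.Perm (Fin n)} (hπ : π ∈ permsOn J) (S : Finset (Fin n)) :
    (∑ σ ∈ permsOn J, fhat f ((S.image π).image σ)) = ∑ σ ∈ permsOn J, fhat f (S.image σ) := by
  rw [← sum_permsOn_mul J hπ (fun σ => fhat f (S.image σ))]
  refine Finset.sum_congr rfl (fun σ _ => ?_)
  congr 1
  rw [Finset.image_image, Equiv.Perm.coe_mul]

lemma card_cube : (Finset.univ : Finset (Fin n → Bool)).card = 2^n := by
  simp [Finset.card_univ]

/-- Fourier representation of symmetric influence. -/
theorem symInf_fourier (n : ℕ) (f : (Fin n → Bool) → ℝ)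
    (hf : ∀ x, f x = 1 ∨ f x = -1) (J : Finset (Fin n)) :
    SymInfR f J = (1 / 2) * ∑ S : Finset (Fin n),
      (permExp J (fun π => (fhat f (S.image π)) ^ 2)
        - (permExp J (fun π => fhat f (S.image π))) ^ 2) := by
  have hP : ((2:ℝ)^n) ≠ 0 := by positivity
  set M : ℝ := ((permsOn J).card : ℝ) with hMdef
  have hM : M ≠ 0 := by
    have h := permsOn_card_pos J
    simp only [hMdef, ne_eq, Nat.cast_eq_zero]
    omega
  set F : Finset (Fin n) → ℝ := fhat f with hFdef
  set T : ℝ := ∑ π ∈ permsOn J, ∑ S : Finset (Fin n), F S * F (S.image π) with hTdef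
  -- Parseval
  have hcube : ∑ _x : Fin n → Bool, (1:ℝ) = (2:ℝ)^n := by
    rw [Finset.sum_const, card_cube]
    simp
  have hpar : ∑ S : Finset (Fin n), F S * F S = 1 := by
    rw [hFdef, plancherel f f]
    have h1 : ∀ x, f x * f x = 1 := by intro x; rcases hf x with h|h <;> rw [h] <;> norm_num
    rw [Finset.sum_congr rfl fun x _ => h1 x, hcube, div_self hP]
  have hxsum : ∀ π : Equiv.Perm (Fin n), ∑ x, f x * f (permApply π x)
      = (2:ℝ)^n * ∑ S : Finset (Fin n), F S * F (S.image π) := by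
    intro π
    have h2 : ∑ S : Finset (Fin n), F S * F (S.image π)
        = (∑ x, f x * f (permApply π x)) / (2:ℝ)^n := by
      rw [← plancherel f (fun x => f (permApply π x))]
      exact Finset.sum_congr rfl (fun S _ => by rw [hFdef, fhat_perm])
    rw [h2]
    field_simp
  -- LHS computation
  have hN : SymInfR f J
      = (∑ π ∈ permsOn J, ∑ x : Fin n → Bool, (1 - f x * f (permApply π x))/2)
        / ((2:ℝ)^n * M) := by
    unfold SymInfR
    congr 1
    rw [Finset.card_filter]
    push_cast
    rw [Finset.sum_product, Finset.sum_comm]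
    refine Finset.sum_congr rfl (fun π _ => Finset.sum_congr rfl (fun x _ => ?_))
    exact indic _ _ (hf x) (hf _)
  have hL : SymInfR f J = (1/2) * (1 - T / M) := by
    rw [hN]
    have h3 : ∀ π ∈ permsOn J, ∑ x : Fin n → Bool, (1 - f x * f (permApply π x))/2
        = ((2:ℝ)^n - (2:ℝ)^n * ∑ S : Finset (Fin n), F S * F (S.image π))/2 := by
      intro π _
      rw [← Finset.sum_div, Finset.sum_sub_distrib, hcube, hxsum π]
    rw [Finset.sum_congr rfl h3]
    rw [← Finset.sum_div, Finset.sum_sub_distrib, Finset.sum_const, ← Finset.mul_sum, ← hTdef]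
    rw [nsmul_eq_mul, ← hMdef]
    field_simp
  -- RHS pieces
  have hI1 : ∑ S : Finset (Fin n), permExp J (fun π => F (S.image π) ^ 2) = 1 := by
    unfold permExp
    rw [← Finset.sum_div, Finset.sum_comm]
    have h4 : ∀ π ∈ permsOn J, ∑ S : Finset (Fin n), F (S.image π)^2
        = ∑ S : Finset (Fin n), F S^2 :=
      fun π _ => sum_image_univ (fun S => F S^2) π
    have hps : ∑ S : Finset (Fin n), F S ^2 = 1 := by
      rw [← hpar]
      exact Finset.sum_congr rfl (fun S _ => sq (F S))
    rw [Finset.sum_congr rfl h4, hps, Finset.sum_const, nsmul_eq_mul, mul_one, ← hMdef,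
      div_self hM]
  have haS : ∀ S : Finset (Fin n), permExp J (fun π => F (S.image π))
      = (∑ π ∈ permsOn J, F (S.image π))/M := fun S => rfl
  have hreidx : ∀ π ∈ permsOn J,
      ∑ S : Finset (Fin n), permExp J (fun σ => F (S.image σ)) * F (S.image π)
      = ∑ S : Finset (Fin n), F S * permExp J (fun σ => F (S.image σ)) := by
    intro π hπ
    rw [← sum_image_univ (fun S => permExp J (fun σ => F (S.image σ)) * F (S.image π)) π.symm]
    refine Finset.sum_congr rfl (fun S _ => ?_)
    have h5 : (S.image ⇑π.symm).image ⇑π = S := by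
      rw [Finset.image_image]
      simp
    have h6 : permExp J (fun σ => F ((S.image ⇑π.symm).image σ)) = permExp J (fun σ => F (S.image σ)) := by
      unfold permExp
      congr 1
      have : ⇑π.symm = ⇑(π⁻¹) := rfl
      rw [this]
      exact aInv f J (inv_mem_permsOn hπ) S
    rw [h5, h6]
    ring
  have step2 : ∑ S : Finset (Fin n), F S * permExp J (fun σ => F (S.image σ)) = T / M := by
    have h8 : ∀ S : Finset (Fin n), F S * permExp J (fun σ => F (S.image σ))
        = (∑ π ∈ permsOn J, F S * F (S.image π))/M := by
      intro S; rw [haS S, ← mul_div_assoc, Finset.mul_sum]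
    rw [Finset.sum_congr rfl (fun S _ => h8 S), ← Finset.sum_div, Finset.sum_comm, ← hTdef]
  have hI2 : ∑ S : Finset (Fin n), (permExp J (fun π => F (S.image π))) ^ 2 = T / M := by
    have h7 : ∀ S : Finset (Fin n), (permExp J (fun π => F (S.image π)))^2
        = (∑ π ∈ permsOn J, permExp J (fun σ => F (S.image σ)) * F (S.image π))/M := by
      intro S
      calc (permExp J fun π => F (S.image π))^2
          = ((permExp J fun σ => F (S.image σ)) * ∑ π ∈ permsOn J, F (S.image π))/M := by
            rw [sq]
            nth_rewrite 2 [haS S]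
            rw [← mul_div_assoc]
        _ = (∑ π ∈ permsOn J, (permExp J fun σ => F (S.image σ)) * F (S.image π))/M := by
            rw [Finset.mul_sum]
    rw [Finset.sum_congr rfl (fun S _ => h7 S), ← Finset.sum_div, Finset.sum_comm]
    have h9 : ∀ π ∈ permsOn J, ∑ S : Finset (Fin n),
        permExp J (fun σ => F (S.image σ)) * F (S.image π) = T/M := by
      intro π hπ
      rw [hreidx π hπ, step2]
    rw [Finset.sum_congr rfl h9, Finset.sum_const, nsmul_eq_mul, ← hMdef]
    field_simp
  rw [hL]
  congr 1
  rw [Finset.sum_sub_distrib, hI1, hI2]
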